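/- Let G be a graph containing a 4-vertex v lying on two 3-cycles vu1u2 and vw1w2 with deg_G(u1) = deg_G(w1) = 3 and deg_G(u2) = deg_G(w2) = 4. Then the subgraph induced by {u1,u2,v,w1,w2} is ({C4},4)-boundary-reducible with empty boundary. -/

import Mathlib

open Finset

/-- A proper coloring of `G` from the lists `L`. -/
def IsProperListColoring {V : Type} (G : SimpleGraph V) (L : V → Finset ℕ) (φ : V → ℕ) : Prop :=
  (∀ v, φ v ∈ L v) ∧ ∀ ⦃u v : V⦄, G.Adj u v → φ u ≠ φ v

/-- `G` is weighted `ε`-flexible for lists of size `k`. -/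
def WeightedFlexible {V : Type} [Fintype V] (G : SimpleGraph V) (k : ℕ) (ε : ℝ) : Prop :=
  ∀ L : V → Finset ℕ, (∀ v, k ≤ (L v).card) →
    ∀ w : V → ℕ → ℝ, (∀ v c, 0 ≤ w v c) → (∀ v c, c ∉ L v → w v c = 0) →
      ∃ φ : V → ℕ, IsProperListColoring G L φ ∧
        ε * (∑ v, ∑ c ∈ L v, w v c) ≤ ∑ v, w v (φ v)

/-- `G` is weakly `ε`-flexible for lists of size `k`. -/
def WeaklyFlexible {V : Type} [Fintype V] (G : SimpleGraph V) (k : ℕ) (ε : ℝ) : Prop :=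
  ∀ L : V → Finset ℕ, (∀ v, k ≤ (L v).card) →
    ∀ r : V → ℕ, (∀ v, r v ∈ L v) →
      ∃ φ : V → ℕ, IsProperListColoring G L φ ∧
        ε * (Fintype.card V : ℝ) ≤ ((Finset.univ.filter fun v => φ v = r v).card : ℝ)

/-- `G` has a drawing in the plane: vertices go to distinct points, edges to simple
continuous arcs joining their endpoints, arcs internally avoid vertices and each other. -/
def HasPlanarEmbedding {V : Type} (G : SimpleGraph V) : Prop :=
  ∃ (pos : V → ℝ × ℝ) (γ : Sym2 V → ℝ → ℝ × ℝ),
    Function.Injective pos ∧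
    (∀ e ∈ G.edgeSet, ContinuousOn (γ e) (Set.Icc 0 1)) ∧
    (∀ e ∈ G.edgeSet, Set.InjOn (γ e) (Set.Icc 0 1)) ∧
    (∀ u v : V, G.Adj u v → ({γ s(u, v) 0, γ s(u, v) 1} : Set (ℝ × ℝ)) = {pos u, pos v}) ∧
    (∀ e ∈ G.edgeSet, ∀ t ∈ Set.Ioo (0 : ℝ) 1, γ e t ∉ Set.range pos) ∧
    (∀ e ∈ G.edgeSet, ∀ f ∈ G.edgeSet, e ≠ f →
      ∀ s ∈ Set.Ioo (0 : ℝ) 1, ∀ t ∈ Set.Ioo (0 : ℝ) 1, γ e s ≠ γ f t)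

/-- `G` contains a copy of the graph `p.2` as a (not necessarily induced) subgraph. -/
def ContainsCopy {V : Type} (G : SimpleGraph V) (p : (W : Type) × SimpleGraph W) : Prop :=
  ∃ f : p.2 →g G, Function.Injective f

/-- `K₄` minus an edge (the diamond). -/
def diamondGraph : SimpleGraph (Fin 4) :=
  SimpleGraph.fromEdgeSet {s(0, 1), s(0, 2), s(0, 3), s(1, 2), s(1, 3)}

/-- The house: a `3`-cycle `0 1 4` and a `4`-cycle `0 1 2 3` sharing the edge `01`. -/
def houseGraph : SimpleGraph (Fin 5) :=
  SimpleGraph.fromEdgeSet {s(0, 1), s(1, 2), s(2, 3), s(3, 0), s(0, 4), s(1, 4)}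

/-- Two triangles sharing exactly one vertex. -/
def bowtieGraph : SimpleGraph (Fin 5) :=
  SimpleGraph.fromEdgeSet {s(0, 1), s(1, 2), s(0, 2), s(0, 3), s(3, 4), s(0, 4)}

/-- Two disjoint triangles joined by an edge. -/
def twoTrianglesEdgeGraph : SimpleGraph (Fin 6) :=
  SimpleGraph.fromEdgeSet {s(0, 1), s(1, 2), s(0, 2), s(3, 4), s(4, 5), s(3, 5), s(0, 3)}

def IsTriangle {V : Type} (G : SimpleGraph V) (a b c : V) : Prop :=
  G.Adj a b ∧ G.Adj b c ∧ G.Adj a c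

/-- Any two distinct `3`-cycles of `G` are at distance at least `2`. -/
def TrianglesFarApart {V : Type} (G : SimpleGraph V) : Prop :=
  ∀ a b c a' b' c' : V, IsTriangle G a b c → IsTriangle G a' b' c' →
    ({a, b, c} : Set V) ≠ ({a', b', c'} : Set V) →
    ∀ x ∈ ({a, b, c} : Set V), ∀ y ∈ ({a', b', c'} : Set V), x ≠ y ∧ ¬ G.Adj x y

/-- Every nonempty (induced) subgraph of `G` has a vertex of degree at most `d`. -/
def Degenerate {V : Type} (G : SimpleGraph V) [DecidableRel G.Adj] (d : ℕ) : Prop :=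
  ∀ S : Finset V, S.Nonempty → ∃ v ∈ S, (S.filter fun w => G.Adj v w).card ≤ d

/-- The degree of `v` into the set `A`. -/
def degIn {V : Type} (G : SimpleGraph V) [DecidableRel G.Adj] (A : Finset V) (v : V) : ℕ :=
  (A.filter fun w => G.Adj v w).card

/-- The graph induced by `G` on `T` is colorable from every list assignment
with list sizes at least `f`. -/
def ColorableOn {V : Type} (G : SimpleGraph V) (T : Finset V) (f : V → ℤ) : Prop :=
  ∀ L : V → Finset ℕ, (∀ v ∈ T, f v ≤ ((L v).card : ℤ)) →
    ∃ φ : V → ℕ, (∀ v ∈ T, φ v ∈ L v) ∧ ∀ u ∈ T, ∀ v ∈ T, G.Adj u v → φ u ≠ φ v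

/-- The subgraph of `G` induced on `S`, together with one additional vertex
adjacent exactly to the vertices of `I`. -/
def apexGraph {V : Type} (G : SimpleGraph V) (S I : Finset V) :
    SimpleGraph ({x // x ∈ S} ⊕ Unit) where
  Adj x y :=
    match x, y with
    | Sum.inl a, Sum.inl b => G.Adj a.1 b.1
    | Sum.inl a, Sum.inr _ => a.1 ∈ I
    | Sum.inr _, Sum.inl b => b.1 ∈ I
    | Sum.inr _, Sum.inr _ => False
  symm := by
    constructor
    rintro (a | a) (b | b) h
    · exact G.adj_symm h
    · exact h
    · exact h
    · exact h
  loopless := by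
    constructor
    rintro (a | a) h
    · exact G.ne_of_adj h rfl
    · exact h

/-- `I ⊆ S` is `F`-forbidding (for the subgraph of `G` induced on `S`):
the induced subgraph plus an apex over `I` contains no member of `F` as a subgraph. -/
def Forbidding {V : Type} (F : Set ((W : Type) × SimpleGraph W)) (G : SimpleGraph V)
    (S I : Finset V) : Prop :=
  ∀ p ∈ F, ¬ ContainsCopy (apexGraph G S I) p

/-- The subgraph of `G` induced on `S` is `(F,k)`-boundary-reducible with boundary `B`,
inside the ambient induced subgraph of `G` on `A` (degrees `deg_G` are measured in `A`). -/
def BoundaryReducibleIn {V : Type} [DecidableEq V] (F : Set ((W : Type) × SimpleGraph W))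
    (k : ℕ) (G : SimpleGraph V) [DecidableRel G.Adj] (A S B : Finset V) : Prop :=
  S ⊆ A ∧ B ⊂ S ∧
  (∀ v ∈ S \ B, ColorableOn G (S \ B)
      (Function.update (fun w => (k : ℤ) - degIn G A w + degIn G (S \ B) w) v 1)) ∧
  (∀ I : Finset V, I ⊆ S \ B → (I.card : ℤ) ≤ (k : ℤ) - 2 → Forbidding F G S I →
    ColorableOn G (S \ B)
      (fun w => (k : ℤ) - degIn G A w + degIn G (S \ B) w - if w ∈ I then 1 else 0))

/-- Weak `(F,k)`-boundary-reducibility, witnessed by the set `Fx = Fix(H)`. -/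
def WeakBoundaryReducibleInWith {V : Type} [DecidableEq V]
    (F : Set ((W : Type) × SimpleGraph W)) (k : ℕ) (G : SimpleGraph V) [DecidableRel G.Adj]
    (A S B Fx : Finset V) : Prop :=
  S ⊆ A ∧ B ⊂ S ∧ Fx.Nonempty ∧ Fx ⊆ S \ B ∧
  (∀ v ∈ Fx, ColorableOn G (S \ B)
      (Function.update (fun w => (k : ℤ) - degIn G A w + degIn G (S \ B) w) v 1)) ∧
  (∀ I : Finset V, I ⊆ S \ B → (I.card : ℤ) ≤ (k : ℤ) - 2 → Forbidding F G S I →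
    ColorableOn G (S \ B)
      (fun w => (k : ℤ) - degIn G A w + degIn G (S \ B) w - if w ∈ I then 1 else 0))

/-- An `(F,k,b)`-resolution of `G`: nested induced subgraphs `G_i` of `G` on the vertex
sets `A i`, where `G_i` is obtained from `G_{i-1}` by deleting `H_i - B_i` for an induced
`(F,k)`-boundary-reducible subgraph `H_i` (on vertex set `S i`) of `G_{i-1}`,
and the last graph `G_M` is itself reducible with empty boundary and has at most `b` vertices. -/
structure Resolution {V : Type} [Fintype V] [DecidableEq V]
    (F : Set ((W : Type) × SimpleGraph W)) (k b : ℕ)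
    (G : SimpleGraph V) [DecidableRel G.Adj] where
  M : ℕ
  S : ℕ → Finset V
  B : ℕ → Finset V
  A : ℕ → Finset V
  hA0 : A 0 = Finset.univ
  hAstep : ∀ i, 1 ≤ i → i ≤ M → A i = A (i - 1) \ (S i \ B i)
  avoid : ∀ p ∈ F, ¬ ContainsCopy G p
  red : ∀ i, 1 ≤ i → i ≤ M → BoundaryReducibleIn F k G (A (i - 1)) (S i) (B i)
  size : ∀ i, 1 ≤ i → i ≤ M → (S i \ B i).card ≤ b
  last : BoundaryReducibleIn F k G (A M) (A M) ∅
  lastsize : (A M).card ≤ b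

/-- A weak `(F,k,b)`-resolution of `G`; `Fx i` is the set `Fix(H_i)` for the `i`-th
reducible subgraph (`1 ≤ i ≤ M`), and `Fx 0` is the `Fix` set of the last graph `G_M`. -/
structure WeakResolution {V : Type} [Fintype V] [DecidableEq V]
    (F : Set ((W : Type) × SimpleGraph W)) (k b : ℕ)
    (G : SimpleGraph V) [DecidableRel G.Adj] where
  M : ℕ
  S : ℕ → Finset V
  B : ℕ → Finset V
  A : ℕ → Finset V
  Fx : ℕ → Finset V
  hA0 : A 0 = Finset.univ
  hAstep : ∀ i, 1 ≤ i → i ≤ M → A i = A (i - 1) \ (S i \ B i)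
  avoid : ∀ p ∈ F, ¬ ContainsCopy G p
  red : ∀ i, 1 ≤ i → i ≤ M → WeakBoundaryReducibleInWith F k G (A (i - 1)) (S i) (B i) (Fx i)
  size : ∀ i, 1 ≤ i → i ≤ M → (S i \ B i).card ≤ b
  last : WeakBoundaryReducibleInWith F k G (A M) (A M) ∅ (Fx 0)
  lastsize : (A M).card ≤ b

/-- `Fix(G)`: the union of the `Fix` sets of the reducible subgraphs of the resolution. -/
def WeakResolution.FixG {V : Type} [Fintype V] [DecidableEq V]
    {F : Set ((W : Type) × SimpleGraph W)} {k b : ℕ}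
    {G : SimpleGraph V} [DecidableRel G.Adj] (R : WeakResolution F k b G) : Finset V :=
  (Finset.range (R.M + 1)).biUnion R.Fx

lemma containsCopy_c4 {W : Type} (H : SimpleGraph W) (a b c d : W)
    (hab : H.Adj a b) (hbc : H.Adj b c) (hcd : H.Adj c d) (hda : H.Adj d a)
    (hac : a ≠ c) (hbd : b ≠ d) :
    ContainsCopy H ⟨Fin 4, SimpleGraph.cycleGraph 4⟩ := by
  have h1 : a ≠ b := hab.ne
  have h2 : b ≠ c := hbc.ne
  have h3 : c ≠ d := hcd.ne
  have h4 : d ≠ a := hda.ne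
  refine ⟨⟨![a, b, c, d], ?_⟩, ?_⟩
  · intro i j hij
    fin_cases i <;> fin_cases j <;>
      first
        | exact absurd hij (by decide)
        | exact hab | exact hab.symm | exact hbc | exact hbc.symm
        | exact hcd | exact hcd.symm | exact hda | exact hda.symm
  · intro i j hij
    fin_cases i <;> fin_cases j <;> simp_all <;>
      first
        | rfl
        | exact absurd hij h1 | exact absurd hij (Ne.symm h1)
        | exact absurd hij h2 | exact absurd hij (Ne.symm h2)
        | exact absurd hij h3 | exact absurd hij (Ne.symm h3)
        | exact absurd hij h4 | exact absurd hij (Ne.symm h4)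
        | exact absurd hij hac | exact absurd hij (Ne.symm hac)
        | exact absurd hij hbd | exact absurd hij (Ne.symm hbd)
lemma apex_c4_inner {V : Type} (G : SimpleGraph V) (S I : Finset V) (a b c d : V)
    (ha : a ∈ S) (hb : b ∈ S) (hc : c ∈ S) (hd : d ∈ S)
    (hab : G.Adj a b) (hbc : G.Adj b c) (hcd : G.Adj c d) (hda : G.Adj d a)
    (hac : a ≠ c) (hbd : b ≠ d) :
    ContainsCopy (apexGraph G S I) ⟨Fin 4, SimpleGraph.cycleGraph 4⟩ := by
  apply containsCopy_c4 (apexGraph G S I)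
    (Sum.inl ⟨a, ha⟩) (Sum.inl ⟨b, hb⟩) (Sum.inl ⟨c, hc⟩) (Sum.inl ⟨d, hd⟩)
  · exact hab
  · exact hbc
  · exact hcd
  · exact hda
  · simp [hac]
  · simp [hbd]

lemma apex_c4_apex {V : Type} (G : SimpleGraph V) (S I : Finset V) (a b c : V)
    (ha : a ∈ S) (hb : b ∈ S) (hc : c ∈ S) (haI : a ∈ I) (hcI : c ∈ I)
    (hab : G.Adj a b) (hbc : G.Adj b c) (hac : a ≠ c) :
    ContainsCopy (apexGraph G S I) ⟨Fin 4, SimpleGraph.cycleGraph 4⟩ := by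
  apply containsCopy_c4 (apexGraph G S I)
    (Sum.inr ()) (Sum.inl ⟨a, ha⟩) (Sum.inl ⟨b, hb⟩) (Sum.inl ⟨c, hc⟩)
  · exact haI
  · exact hab
  · exact hbc
  · exact hcI
  · simp
  · simp [hac]

lemma pick1 {L F : Finset ℕ} (h : F.card + 1 ≤ L.card) : ∃ c ∈ L, c ∉ F := by
  have h2 := Finset.le_card_sdiff F L
  have h3 : 0 < (L \ F).card := by omega
  obtain ⟨c, hc⟩ := Finset.card_pos.mp h3
  rw [Finset.mem_sdiff] at hc
  exact ⟨c, hc.1, hc.2⟩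

lemma pick2 {L F : Finset ℕ} (h : F.card + 2 ≤ L.card) :
    ∃ a ∈ L, ∃ b ∈ L, a ∉ F ∧ b ∉ F ∧ a ≠ b := by
  have h2 := Finset.le_card_sdiff F L
  have h3 : 1 < (L \ F).card := by omega
  obtain ⟨a, ha, b, hb, hab⟩ := Finset.one_lt_card.mp h3
  rw [Finset.mem_sdiff] at ha hb
  exact ⟨a, ha.1, b, hb.1, ha.2, hb.2, hab⟩
lemma colorA {V : Type} [DecidableEq V] (G : SimpleGraph V) [DecidableRel G.Adj]
    (x1 x2 x3 x4 x5 : V) (L : V → Finset ℕ)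
    (h12 : x1 ≠ x2) (h13 : x1 ≠ x3) (h14 : x1 ≠ x4) (h15 : x1 ≠ x5)
    (h23 : x2 ≠ x3) (h24 : x2 ≠ x4) (h25 : x2 ≠ x5)
    (h34 : x3 ≠ x4) (h35 : x3 ≠ x5) (h45 : x4 ≠ x5)
    (hk1 : 1 ≤ (L x1).card)
    (hk2 : 1 + (if G.Adj x1 x2 then 1 else 0) ≤ (L x2).card)
    (hk3 : 1 + (if G.Adj x1 x3 then 1 else 0) + (if G.Adj x2 x3 then 1 else 0) ≤ (L x3).card)
    (hk4 : 2 + (if G.Adj x1 x4 then 1 else 0) + (if G.Adj x2 x4 then 1 else 0)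
        + (if G.Adj x3 x4 then 1 else 0) ≤ (L x4).card)
    (hk5 : 4 ≤ (L x5).card) :
    ∃ φ : V → ℕ, (∀ t, t = x1 ∨ t = x2 ∨ t = x3 ∨ t = x4 ∨ t = x5 → φ t ∈ L t) ∧
      ∀ a b, (a = x1 ∨ a = x2 ∨ a = x3 ∨ a = x4 ∨ a = x5) →
        (b = x1 ∨ b = x2 ∨ b = x3 ∨ b = x4 ∨ b = x5) → G.Adj a b → φ a ≠ φ b := by
  obtain ⟨c1, hc1⟩ := Finset.card_pos.mp (by omega : 0 < (L x1).card)
  -- pick c2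
  have hF2 : ((if G.Adj x1 x2 then {c1} else ∅) : Finset ℕ).card + 1 ≤ (L x2).card := by
    have e1 : ((if G.Adj x1 x2 then ({c1} : Finset ℕ) else ∅)).card
        = (if G.Adj x1 x2 then 1 else 0) := by split <;> simp
    omega
  obtain ⟨c2, hc2, hc2F⟩ := pick1 hF2
  have n21 : G.Adj x1 x2 → c2 ≠ c1 := by
    intro h heq; rw [if_pos h] at hc2F; simp [heq] at hc2F
  -- pick c3
  have hF3 : (((if G.Adj x1 x3 then {c1} else ∅) ∪ (if G.Adj x2 x3 then {c2} else ∅))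
      : Finset ℕ).card + 1 ≤ (L x3).card := by
    have := Finset.card_union_le ((if G.Adj x1 x3 then ({c1} : Finset ℕ) else ∅))
      ((if G.Adj x2 x3 then ({c2} : Finset ℕ) else ∅))
    have e1 : ((if G.Adj x1 x3 then ({c1} : Finset ℕ) else ∅)).card
        = (if G.Adj x1 x3 then 1 else 0) := by split <;> simp
    have e2 : ((if G.Adj x2 x3 then ({c2} : Finset ℕ) else ∅)).card
        = (if G.Adj x2 x3 then 1 else 0) := by split <;> simp
    omega
  obtain ⟨c3, hc3, hc3F⟩ := pick1 hF3
  rw [Finset.mem_union, not_or] at hc3F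
  have n31 : G.Adj x1 x3 → c3 ≠ c1 := by
    intro h heq; have := hc3F.1; rw [if_pos h] at this; simp [heq] at this
  have n32 : G.Adj x2 x3 → c3 ≠ c2 := by
    intro h heq; have := hc3F.2; rw [if_pos h] at this; simp [heq] at this
  -- pick c4 : two candidates
  have hF4 : (((if G.Adj x1 x4 then {c1} else ∅) ∪ (if G.Adj x2 x4 then {c2} else ∅)
      ∪ (if G.Adj x3 x4 then {c3} else ∅)) : Finset ℕ).card + 2 ≤ (L x4).card := by
    have t1 := Finset.card_union_le ((if G.Adj x1 x4 then ({c1} : Finset ℕ) else ∅) ∪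
      (if G.Adj x2 x4 then ({c2} : Finset ℕ) else ∅))
      ((if G.Adj x3 x4 then ({c3} : Finset ℕ) else ∅))
    have t2 := Finset.card_union_le ((if G.Adj x1 x4 then ({c1} : Finset ℕ) else ∅))
      ((if G.Adj x2 x4 then ({c2} : Finset ℕ) else ∅))
    have e1 : ((if G.Adj x1 x4 then ({c1} : Finset ℕ) else ∅)).card
        = (if G.Adj x1 x4 then 1 else 0) := by split <;> simp
    have e2 : ((if G.Adj x2 x4 then ({c2} : Finset ℕ) else ∅)).card
        = (if G.Adj x2 x4 then 1 else 0) := by split <;> simp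
    have e3 : ((if G.Adj x3 x4 then ({c3} : Finset ℕ) else ∅)).card
        = (if G.Adj x3 x4 then 1 else 0) := by split <;> simp
    omega
  obtain ⟨a, haL, b, hbL, haF, hbF, hab⟩ := pick2 hF4
  -- choose the good candidate for x4
  have hgood : ∃ c4, c4 ∈ L x4 ∧
      c4 ∉ ((if G.Adj x1 x4 then ({c1} : Finset ℕ) else ∅) ∪ (if G.Adj x2 x4 then {c2} else ∅)
        ∪ (if G.Adj x3 x4 then {c3} else ∅)) ∧
      ¬ (L x5 ⊆ {c4, c1, c2, c3}) := by
    by_cases hbad : L x5 ⊆ {a, c1, c2, c3}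
    · refine ⟨b, hbL, hbF, fun hbad' => ?_⟩
      have hsub : L x5 ⊆ {c1, c2, c3} := by
        intro x hx
        have h1 := hbad hx
        have h2 := hbad' hx
        simp only [Finset.mem_insert, Finset.mem_singleton] at h1 h2 ⊢
        rcases h1 with rfl | h1
        · rcases h2 with rfl | h2
          · exact absurd rfl hab
          · exact h2
        · exact h1
      have hcard1 := Finset.card_le_card hsub
      have hcard2 : ({c1, c2, c3} : Finset ℕ).card ≤ 3 :=
        le_trans (Finset.card_insert_le _ _) (by
          have := Finset.card_insert_le c2 ({c3} : Finset ℕ); simp at this ⊢; omega)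
      omega
    · exact ⟨a, haL, haF, hbad⟩
  obtain ⟨c4, hc4, hc4F, hc4good⟩ := hgood
  rw [Finset.mem_union, Finset.mem_union, not_or, not_or] at hc4F
  have n41 : G.Adj x1 x4 → c4 ≠ c1 := by
    intro h heq; have := hc4F.1.1; rw [if_pos h] at this; simp [heq] at this
  have n42 : G.Adj x2 x4 → c4 ≠ c2 := by
    intro h heq; have := hc4F.1.2; rw [if_pos h] at this; simp [heq] at this
  have n43 : G.Adj x3 x4 → c4 ≠ c3 := by
    intro h heq; have := hc4F.2; rw [if_pos h] at this; simp [heq] at this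
  -- pick c5
  obtain ⟨c5, hc5, hc5F⟩ := Finset.not_subset.mp hc4good
  simp only [Finset.mem_insert, Finset.mem_singleton, not_or] at hc5F
  obtain ⟨n54, n51, n52, n53⟩ := hc5F
  -- assemble
  refine ⟨fun t => if t = x1 then c1 else if t = x2 then c2 else if t = x3 then c3
    else if t = x4 then c4 else c5, ?_, ?_⟩
  · intro t ht
    rcases ht with rfl | rfl | rfl | rfl | rfl
    · simpa using hc1
    · simp only [if_neg (Ne.symm h12), if_pos rfl]; exact hc2
    · simp only [if_neg (Ne.symm h13), if_neg (Ne.symm h23), if_pos rfl]; exact hc3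
    · simp only [if_neg (Ne.symm h14), if_neg (Ne.symm h24), if_neg (Ne.symm h34),
        if_pos rfl]; exact hc4
    · simp only [if_neg (Ne.symm h15), if_neg (Ne.symm h25), if_neg (Ne.symm h35),
        if_neg (Ne.symm h45)]; exact hc5
  · intro p q hp hq hadj
    rcases hp with rfl | rfl | rfl | rfl | rfl <;> rcases hq with rfl | rfl | rfl | rfl | rfl <;>
      simp only [if_pos rfl, if_neg (Ne.symm h12), if_neg (Ne.symm h13), if_neg (Ne.symm h23),
        if_neg (Ne.symm h14), if_neg (Ne.symm h24), if_neg (Ne.symm h34),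
        if_neg (Ne.symm h15), if_neg (Ne.symm h25), if_neg (Ne.symm h35),
        if_neg (Ne.symm h45), if_neg h12, if_neg h13, if_neg h23, if_neg h14, if_neg h24,
        if_neg h34, if_neg h15, if_neg h25, if_neg h35, if_neg h45] <;>
      first
        | exact absurd hadj G.irrefl
        | exact Ne.symm (n21 hadj)
        | exact n21 hadj.symm
        | exact Ne.symm (n31 hadj)
        | exact n31 hadj.symm
        | exact Ne.symm (n32 hadj)
        | exact n32 hadj.symm
        | exact Ne.symm (n41 hadj)
        | exact n41 hadj.symm
        | exact Ne.symm (n42 hadj)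
        | exact n42 hadj.symm
        | exact Ne.symm (n43 hadj)
        | exact n43 hadj.symm
        | exact Ne.symm n51 | exact n51
        | exact Ne.symm n52 | exact n52
        | exact Ne.symm n53 | exact n53
        | exact Ne.symm n54 | exact n54
lemma colorB {V : Type} [DecidableEq V] (G : SimpleGraph V) [DecidableRel G.Adj]
    (x1 x2 x3 x4 x5 : V) (L : V → Finset ℕ)
    (h12 : x1 ≠ x2) (h13 : x1 ≠ x3) (h14 : x1 ≠ x4) (h15 : x1 ≠ x5)
    (h23 : x2 ≠ x3) (h24 : x2 ≠ x4) (h25 : x2 ≠ x5)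
    (h34 : x3 ≠ x4) (h35 : x3 ≠ x5) (h45 : x4 ≠ x5)
    (hk1 : 1 ≤ (L x1).card)
    (hk2 : 1 + (if G.Adj x1 x2 then 1 else 0) ≤ (L x2).card)
    (hk3 : 1 + (if G.Adj x1 x3 then 1 else 0) + (if G.Adj x2 x3 then 1 else 0) ≤ (L x3).card)
    (hk4 : 1 + (if G.Adj x1 x4 then 1 else 0) + (if G.Adj x2 x4 then 1 else 0)
        + (if G.Adj x3 x4 then 1 else 0) ≤ (L x4).card)
    (hk5 : 1 + (if G.Adj x1 x5 then 1 else 0) + (if G.Adj x2 x5 then 1 else 0)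
        + (if G.Adj x3 x5 then 1 else 0) + (if G.Adj x4 x5 then 1 else 0) ≤ (L x5).card) :
    ∃ φ : V → ℕ, (∀ t, t = x1 ∨ t = x2 ∨ t = x3 ∨ t = x4 ∨ t = x5 → φ t ∈ L t) ∧
      ∀ a b, (a = x1 ∨ a = x2 ∨ a = x3 ∨ a = x4 ∨ a = x5) →
        (b = x1 ∨ b = x2 ∨ b = x3 ∨ b = x4 ∨ b = x5) → G.Adj a b → φ a ≠ φ b := by
  obtain ⟨c1, hc1⟩ := Finset.card_pos.mp (by omega : 0 < (L x1).card)
  have hF2 : ((if G.Adj x1 x2 then {c1} else ∅) : Finset ℕ).card + 1 ≤ (L x2).card := by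
    have e1 : ((if G.Adj x1 x2 then ({c1} : Finset ℕ) else ∅)).card
        = (if G.Adj x1 x2 then 1 else 0) := by split <;> simp
    omega
  obtain ⟨c2, hc2, hc2F⟩ := pick1 hF2
  have n21 : G.Adj x1 x2 → c2 ≠ c1 := by
    intro h heq; rw [if_pos h] at hc2F; simp [heq] at hc2F
  have hF3 : (((if G.Adj x1 x3 then {c1} else ∅) ∪ (if G.Adj x2 x3 then {c2} else ∅))
      : Finset ℕ).card + 1 ≤ (L x3).card := by
    have t1 := Finset.card_union_le ((if G.Adj x1 x3 then ({c1} : Finset ℕ) else ∅))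
      ((if G.Adj x2 x3 then ({c2} : Finset ℕ) else ∅))
    have e1 : ((if G.Adj x1 x3 then ({c1} : Finset ℕ) else ∅)).card
        = (if G.Adj x1 x3 then 1 else 0) := by split <;> simp
    have e2 : ((if G.Adj x2 x3 then ({c2} : Finset ℕ) else ∅)).card
        = (if G.Adj x2 x3 then 1 else 0) := by split <;> simp
    omega
  obtain ⟨c3, hc3, hc3F⟩ := pick1 hF3
  rw [Finset.mem_union, not_or] at hc3F
  have n31 : G.Adj x1 x3 → c3 ≠ c1 := by
    intro h heq; have := hc3F.1; rw [if_pos h] at this; simp [heq] at this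
  have n32 : G.Adj x2 x3 → c3 ≠ c2 := by
    intro h heq; have := hc3F.2; rw [if_pos h] at this; simp [heq] at this
  have hF4 : (((if G.Adj x1 x4 then {c1} else ∅) ∪ (if G.Adj x2 x4 then {c2} else ∅)
      ∪ (if G.Adj x3 x4 then {c3} else ∅)) : Finset ℕ).card + 1 ≤ (L x4).card := by
    have t1 := Finset.card_union_le ((if G.Adj x1 x4 then ({c1} : Finset ℕ) else ∅) ∪
      (if G.Adj x2 x4 then ({c2} : Finset ℕ) else ∅))
      ((if G.Adj x3 x4 then ({c3} : Finset ℕ) else ∅))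
    have t2 := Finset.card_union_le ((if G.Adj x1 x4 then ({c1} : Finset ℕ) else ∅))
      ((if G.Adj x2 x4 then ({c2} : Finset ℕ) else ∅))
    have e1 : ((if G.Adj x1 x4 then ({c1} : Finset ℕ) else ∅)).card
        = (if G.Adj x1 x4 then 1 else 0) := by split <;> simp
    have e2 : ((if G.Adj x2 x4 then ({c2} : Finset ℕ) else ∅)).card
        = (if G.Adj x2 x4 then 1 else 0) := by split <;> simp
    have e3 : ((if G.Adj x3 x4 then ({c3} : Finset ℕ) else ∅)).card
        = (if G.Adj x3 x4 then 1 else 0) := by split <;> simp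
    omega
  obtain ⟨c4, hc4, hc4F⟩ := pick1 hF4
  rw [Finset.mem_union, Finset.mem_union, not_or, not_or] at hc4F
  have n41 : G.Adj x1 x4 → c4 ≠ c1 := by
    intro h heq; have := hc4F.1.1; rw [if_pos h] at this; simp [heq] at this
  have n42 : G.Adj x2 x4 → c4 ≠ c2 := by
    intro h heq; have := hc4F.1.2; rw [if_pos h] at this; simp [heq] at this
  have n43 : G.Adj x3 x4 → c4 ≠ c3 := by
    intro h heq; have := hc4F.2; rw [if_pos h] at this; simp [heq] at this
  have hF5 : (((if G.Adj x1 x5 then {c1} else ∅) ∪ (if G.Adj x2 x5 then {c2} else ∅)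
      ∪ (if G.Adj x3 x5 then {c3} else ∅) ∪ (if G.Adj x4 x5 then {c4} else ∅))
      : Finset ℕ).card + 1 ≤ (L x5).card := by
    have t1 := Finset.card_union_le ((if G.Adj x1 x5 then ({c1} : Finset ℕ) else ∅) ∪
      (if G.Adj x2 x5 then ({c2} : Finset ℕ) else ∅) ∪
      (if G.Adj x3 x5 then ({c3} : Finset ℕ) else ∅))
      ((if G.Adj x4 x5 then ({c4} : Finset ℕ) else ∅))
    have t2 := Finset.card_union_le ((if G.Adj x1 x5 then ({c1} : Finset ℕ) else ∅) ∪
      (if G.Adj x2 x5 then ({c2} : Finset ℕ) else ∅))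
      ((if G.Adj x3 x5 then ({c3} : Finset ℕ) else ∅))
    have t3 := Finset.card_union_le ((if G.Adj x1 x5 then ({c1} : Finset ℕ) else ∅))
      ((if G.Adj x2 x5 then ({c2} : Finset ℕ) else ∅))
    have e1 : ((if G.Adj x1 x5 then ({c1} : Finset ℕ) else ∅)).card
        = (if G.Adj x1 x5 then 1 else 0) := by split <;> simp
    have e2 : ((if G.Adj x2 x5 then ({c2} : Finset ℕ) else ∅)).card
        = (if G.Adj x2 x5 then 1 else 0) := by split <;> simp
    have e3 : ((if G.Adj x3 x5 then ({c3} : Finset ℕ) else ∅)).card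
        = (if G.Adj x3 x5 then 1 else 0) := by split <;> simp
    have e4 : ((if G.Adj x4 x5 then ({c4} : Finset ℕ) else ∅)).card
        = (if G.Adj x4 x5 then 1 else 0) := by split <;> simp
    omega
  obtain ⟨c5, hc5, hc5F⟩ := pick1 hF5
  rw [Finset.mem_union, Finset.mem_union, Finset.mem_union, not_or, not_or, not_or] at hc5F
  have n51 : G.Adj x1 x5 → c5 ≠ c1 := by
    intro h heq; have := hc5F.1.1.1; rw [if_pos h] at this; simp [heq] at this
  have n52 : G.Adj x2 x5 → c5 ≠ c2 := by
    intro h heq; have := hc5F.1.1.2; rw [if_pos h] at this; simp [heq] at this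
  have n53 : G.Adj x3 x5 → c5 ≠ c3 := by
    intro h heq; have := hc5F.1.2; rw [if_pos h] at this; simp [heq] at this
  have n54 : G.Adj x4 x5 → c5 ≠ c4 := by
    intro h heq; have := hc5F.2; rw [if_pos h] at this; simp [heq] at this
  refine ⟨fun t => if t = x1 then c1 else if t = x2 then c2 else if t = x3 then c3
    else if t = x4 then c4 else c5, ?_, ?_⟩
  · intro t ht
    rcases ht with rfl | rfl | rfl | rfl | rfl
    · simpa using hc1
    · simp only [if_neg (Ne.symm h12), if_pos rfl]; exact hc2
    · simp only [if_neg (Ne.symm h13), if_neg (Ne.symm h23), if_pos rfl]; exact hc3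
    · simp only [if_neg (Ne.symm h14), if_neg (Ne.symm h24), if_neg (Ne.symm h34),
        if_pos rfl]; exact hc4
    · simp only [if_neg (Ne.symm h15), if_neg (Ne.symm h25), if_neg (Ne.symm h35),
        if_neg (Ne.symm h45)]; exact hc5
  · intro p q hp hq hadj
    rcases hp with rfl | rfl | rfl | rfl | rfl <;> rcases hq with rfl | rfl | rfl | rfl | rfl <;>
      simp only [if_pos rfl, if_neg (Ne.symm h12), if_neg (Ne.symm h13), if_neg (Ne.symm h23),
        if_neg (Ne.symm h14), if_neg (Ne.symm h24), if_neg (Ne.symm h34),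
        if_neg (Ne.symm h15), if_neg (Ne.symm h25), if_neg (Ne.symm h35),
        if_neg (Ne.symm h45), if_neg h12, if_neg h13, if_neg h23, if_neg h14, if_neg h24,
        if_neg h34, if_neg h15, if_neg h25, if_neg h35, if_neg h45] <;>
      first
        | exact absurd hadj G.irrefl
        | exact Ne.symm (n21 hadj) | exact n21 hadj.symm
        | exact Ne.symm (n31 hadj) | exact n31 hadj.symm
        | exact Ne.symm (n32 hadj) | exact n32 hadj.symm
        | exact Ne.symm (n41 hadj) | exact n41 hadj.symm
        | exact Ne.symm (n42 hadj) | exact n42 hadj.symm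
        | exact Ne.symm (n43 hadj) | exact n43 hadj.symm
        | exact Ne.symm (n51 hadj) | exact n51 hadj.symm
        | exact Ne.symm (n52 hadj) | exact n52 hadj.symm
        | exact Ne.symm (n53 hadj) | exact n53 hadj.symm
        | exact Ne.symm (n54 hadj) | exact n54 hadj.symm
lemma colorC1 {V : Type} [DecidableEq V] (G : SimpleGraph V) [DecidableRel G.Adj]
    (x1 x2 x3 x4 x5 : V) (L : V → Finset ℕ) (c1 : ℕ)
    (h12 : x1 ≠ x2) (h13 : x1 ≠ x3) (h14 : x1 ≠ x4) (h15 : x1 ≠ x5)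
    (h23 : x2 ≠ x3) (h24 : x2 ≠ x4) (h25 : x2 ≠ x5)
    (h34 : x3 ≠ x4) (h35 : x3 ≠ x5) (h45 : x4 ≠ x5)
    (hn12 : ¬ G.Adj x1 x2) (hn13 : ¬ G.Adj x1 x3) (hn24 : ¬ G.Adj x2 x4)
    (hn34 : ¬ G.Adj x3 x4)
    (hc1 : c1 ∈ L x1) (hc1v : c1 ∉ L x5)
    (hk2 : 1 ≤ (L x2).card) (hk3 : 2 ≤ (L x3).card) (hk4 : 3 ≤ (L x4).card)
    (hk5 : 3 ≤ (L x5).card) :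
    ∃ φ : V → ℕ, (∀ t, t = x1 ∨ t = x2 ∨ t = x3 ∨ t = x4 ∨ t = x5 → φ t ∈ L t) ∧
      ∀ a b, (a = x1 ∨ a = x2 ∨ a = x3 ∨ a = x4 ∨ a = x5) →
        (b = x1 ∨ b = x2 ∨ b = x3 ∨ b = x4 ∨ b = x5) → G.Adj a b → φ a ≠ φ b := by
  obtain ⟨c2, hc2⟩ := Finset.card_pos.mp (by omega : 0 < (L x2).card)
  obtain ⟨c3, hc3, hc3F⟩ := pick1 (show ({c2} : Finset ℕ).card + 1 ≤ (L x3).card by simp; omega)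
  rw [Finset.mem_singleton] at hc3F
  obtain ⟨a, haL, b, hbL, haF, hbF, hab⟩ :=
    pick2 (show ({c1} : Finset ℕ).card + 2 ≤ (L x4).card by simp; omega)
  have hgood : ∃ c4, c4 ∈ L x4 ∧ c4 ∉ ({c1} : Finset ℕ) ∧ ¬ (L x5 ⊆ {c4, c2, c3}) := by
    by_cases hbad : L x5 ⊆ {a, c2, c3}
    · refine ⟨b, hbL, hbF, fun hbad' => ?_⟩
      have hsub : L x5 ⊆ {c2, c3} := by
        intro x hx
        have h1 := hbad hx
        have h2 := hbad' hx
        simp only [Finset.mem_insert, Finset.mem_singleton] at h1 h2 ⊢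
        rcases h1 with rfl | h1
        · rcases h2 with rfl | h2
          · exact absurd rfl hab
          · exact h2
        · exact h1
      have hcard1 := Finset.card_le_card hsub
      have hcard2 : ({c2, c3} : Finset ℕ).card ≤ 2 :=
        le_trans (Finset.card_insert_le _ _) (by simp)
      omega
    · exact ⟨a, haL, haF, hbad⟩
  obtain ⟨c4, hc4, hc4F, hc4good⟩ := hgood
  rw [Finset.mem_singleton] at hc4F
  obtain ⟨c5, hc5, hc5F⟩ := Finset.not_subset.mp hc4good
  simp only [Finset.mem_insert, Finset.mem_singleton, not_or] at hc5F
  obtain ⟨n54, n52, n53⟩ := hc5F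
  have n51 : c5 ≠ c1 := fun heq => hc1v (heq ▸ hc5)
  have n21 : G.Adj x1 x2 → c2 ≠ c1 := fun h => absurd h hn12
  have n31 : G.Adj x1 x3 → c3 ≠ c1 := fun h => absurd h hn13
  have n32 : G.Adj x2 x3 → c3 ≠ c2 := fun _ => hc3F
  have n41 : G.Adj x1 x4 → c4 ≠ c1 := fun _ => hc4F
  have n42 : G.Adj x2 x4 → c4 ≠ c2 := fun h => absurd h hn24
  have n43 : G.Adj x3 x4 → c4 ≠ c3 := fun h => absurd h hn34
  refine ⟨fun t => if t = x1 then c1 else if t = x2 then c2 else if t = x3 then c3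
    else if t = x4 then c4 else c5, ?_, ?_⟩
  · intro t ht
    rcases ht with rfl | rfl | rfl | rfl | rfl
    · simpa using hc1
    · simp only [if_neg (Ne.symm h12), if_pos rfl]; exact hc2
    · simp only [if_neg (Ne.symm h13), if_neg (Ne.symm h23), if_pos rfl]; exact hc3
    · simp only [if_neg (Ne.symm h14), if_neg (Ne.symm h24), if_neg (Ne.symm h34),
        if_pos rfl]; exact hc4
    · simp only [if_neg (Ne.symm h15), if_neg (Ne.symm h25), if_neg (Ne.symm h35),
        if_neg (Ne.symm h45)]; exact hc5
  · intro p q hp hq hadj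
    rcases hp with rfl | rfl | rfl | rfl | rfl <;> rcases hq with rfl | rfl | rfl | rfl | rfl <;>
      simp only [if_pos rfl, if_neg (Ne.symm h12), if_neg (Ne.symm h13), if_neg (Ne.symm h23),
        if_neg (Ne.symm h14), if_neg (Ne.symm h24), if_neg (Ne.symm h34),
        if_neg (Ne.symm h15), if_neg (Ne.symm h25), if_neg (Ne.symm h35),
        if_neg (Ne.symm h45), if_neg h12, if_neg h13, if_neg h23, if_neg h14, if_neg h24,
        if_neg h34, if_neg h15, if_neg h25, if_neg h35, if_neg h45] <;>
      first
        | exact absurd hadj G.irrefl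
        | exact Ne.symm (n21 hadj) | exact n21 hadj.symm
        | exact Ne.symm (n31 hadj) | exact n31 hadj.symm
        | exact Ne.symm (n32 hadj) | exact n32 hadj.symm
        | exact Ne.symm (n41 hadj) | exact n41 hadj.symm
        | exact Ne.symm (n42 hadj) | exact n42 hadj.symm
        | exact Ne.symm (n43 hadj) | exact n43 hadj.symm
        | exact Ne.symm n51 | exact n51
        | exact Ne.symm n52 | exact n52
        | exact Ne.symm n53 | exact n53
        | exact Ne.symm n54 | exact n54

lemma colorC2 {V : Type} [DecidableEq V] (G : SimpleGraph V) [DecidableRel G.Adj]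
    (x1 x2 x3 x4 x5 : V) (L : V → Finset ℕ) (c : ℕ)
    (h12 : x1 ≠ x2) (h13 : x1 ≠ x3) (h14 : x1 ≠ x4) (h15 : x1 ≠ x5)
    (h23 : x2 ≠ x3) (h24 : x2 ≠ x4) (h25 : x2 ≠ x5)
    (h34 : x3 ≠ x4) (h35 : x3 ≠ x5) (h45 : x4 ≠ x5)
    (hn12 : ¬ G.Adj x1 x2) (hn34 : ¬ G.Adj x3 x4)
    (hc1 : c ∈ L x1) (hc2 : c ∈ L x2)
    (hk3 : 2 ≤ (L x3).card) (hk4 : 3 ≤ (L x4).card) (hk5 : 3 ≤ (L x5).card) :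
    ∃ φ : V → ℕ, (∀ t, t = x1 ∨ t = x2 ∨ t = x3 ∨ t = x4 ∨ t = x5 → φ t ∈ L t) ∧
      ∀ a b, (a = x1 ∨ a = x2 ∨ a = x3 ∨ a = x4 ∨ a = x5) →
        (b = x1 ∨ b = x2 ∨ b = x3 ∨ b = x4 ∨ b = x5) → G.Adj a b → φ a ≠ φ b := by
  obtain ⟨c3, hc3, hc3F⟩ := pick1 (show ({c} : Finset ℕ).card + 1 ≤ (L x3).card by simp; omega)
  rw [Finset.mem_singleton] at hc3F
  obtain ⟨a, haL, b, hbL, haF, hbF, hab⟩ :=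
    pick2 (show ({c} : Finset ℕ).card + 2 ≤ (L x4).card by simp; omega)
  have hgood : ∃ c4, c4 ∈ L x4 ∧ c4 ∉ ({c} : Finset ℕ) ∧ ¬ (L x5 ⊆ {c4, c, c3}) := by
    by_cases hbad : L x5 ⊆ {a, c, c3}
    · refine ⟨b, hbL, hbF, fun hbad' => ?_⟩
      have hsub : L x5 ⊆ {c, c3} := by
        intro x hx
        have h1 := hbad hx
        have h2 := hbad' hx
        simp only [Finset.mem_insert, Finset.mem_singleton] at h1 h2 ⊢
        rcases h1 with rfl | h1
        · rcases h2 with rfl | h2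
          · exact absurd rfl hab
          · exact h2
        · exact h1
      have hcard1 := Finset.card_le_card hsub
      have hcard2 : ({c, c3} : Finset ℕ).card ≤ 2 :=
        le_trans (Finset.card_insert_le _ _) (by simp)
      omega
    · exact ⟨a, haL, haF, hbad⟩
  obtain ⟨c4, hc4, hc4F, hc4good⟩ := hgood
  rw [Finset.mem_singleton] at hc4F
  obtain ⟨c5, hc5, hc5F⟩ := Finset.not_subset.mp hc4good
  simp only [Finset.mem_insert, Finset.mem_singleton, not_or] at hc5F
  obtain ⟨n54, n51, n53⟩ := hc5F
  have n21 : G.Adj x1 x2 → False := fun h => absurd h hn12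
  have n31 : c3 ≠ c := hc3F
  have n41 : c4 ≠ c := hc4F
  have n43 : G.Adj x3 x4 → False := fun h => absurd h hn34
  refine ⟨fun t => if t = x1 then c else if t = x2 then c else if t = x3 then c3
    else if t = x4 then c4 else c5, ?_, ?_⟩
  · intro t ht
    rcases ht with rfl | rfl | rfl | rfl | rfl
    · simpa using hc1
    · simp only [if_neg (Ne.symm h12), if_pos rfl]; exact hc2
    · simp only [if_neg (Ne.symm h13), if_neg (Ne.symm h23), if_pos rfl]; exact hc3
    · simp only [if_neg (Ne.symm h14), if_neg (Ne.symm h24), if_neg (Ne.symm h34),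
        if_pos rfl]; exact hc4
    · simp only [if_neg (Ne.symm h15), if_neg (Ne.symm h25), if_neg (Ne.symm h35),
        if_neg (Ne.symm h45)]; exact hc5
  · intro p q hp hq hadj
    rcases hp with rfl | rfl | rfl | rfl | rfl <;> rcases hq with rfl | rfl | rfl | rfl | rfl <;>
      simp only [if_pos rfl, if_neg (Ne.symm h12), if_neg (Ne.symm h13), if_neg (Ne.symm h23),
        if_neg (Ne.symm h14), if_neg (Ne.symm h24), if_neg (Ne.symm h34),
        if_neg (Ne.symm h15), if_neg (Ne.symm h25), if_neg (Ne.symm h35),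
        if_neg (Ne.symm h45), if_neg h12, if_neg h13, if_neg h23, if_neg h14, if_neg h24,
        if_neg h34, if_neg h15, if_neg h25, if_neg h35, if_neg h45] <;>
      first
        | exact absurd hadj G.irrefl
        | exact (n21 hadj).elim
        | exact (n21 hadj.symm).elim
        | exact (n43 hadj).elim
        | exact (n43 hadj.symm).elim
        | exact Ne.symm n31 | exact n31
        | exact Ne.symm n41 | exact n41
        | exact Ne.symm n51 | exact n51
        | exact Ne.symm n53 | exact n53
        | exact Ne.symm n54 | exact n54
lemma degIn_ge2 {V : Type} [DecidableEq V] (G : SimpleGraph V) [DecidableRel G.Adj]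
    {S : Finset V} {x a b : V} (ha : G.Adj x a) (hb : G.Adj x b)
    (haS : a ∈ S) (hbS : b ∈ S) (hab : a ≠ b) : 2 ≤ degIn G S x := by
  have hsub : ({a, b} : Finset V) ⊆ S.filter fun w => G.Adj x w := by
    intro t ht
    simp only [Finset.mem_insert, Finset.mem_singleton] at ht
    rw [Finset.mem_filter]
    rcases ht with rfl | rfl
    exacts [⟨haS, ha⟩, ⟨hbS, hb⟩]
  calc 2 = ({a, b} : Finset V).card := by rw [Finset.card_pair hab]
    _ ≤ _ := Finset.card_le_card hsub

lemma degIn_ge3 {V : Type} [DecidableEq V] (G : SimpleGraph V) [DecidableRel G.Adj]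
    {S : Finset V} {x a b c : V} (ha : G.Adj x a) (hb : G.Adj x b) (hc : G.Adj x c)
    (haS : a ∈ S) (hbS : b ∈ S) (hcS : c ∈ S)
    (hab : a ≠ b) (hac : a ≠ c) (hbc : b ≠ c) : 3 ≤ degIn G S x := by
  have hsub : ({a, b, c} : Finset V) ⊆ S.filter fun w => G.Adj x w := by
    intro t ht
    simp only [Finset.mem_insert, Finset.mem_singleton] at ht
    rw [Finset.mem_filter]
    rcases ht with rfl | rfl | rfl
    exacts [⟨haS, ha⟩, ⟨hbS, hb⟩, ⟨hcS, hc⟩]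
  have hcard : ({a, b, c} : Finset V).card = 3 := by
    rw [Finset.card_insert_of_notMem (by simp [hab, hac]), Finset.card_pair hbc]
  calc 3 = ({a, b, c} : Finset V).card := hcard.symm
    _ ≤ _ := Finset.card_le_card hsub

lemma degIn_ge4 {V : Type} [DecidableEq V] (G : SimpleGraph V) [DecidableRel G.Adj]
    {S : Finset V} {x a b c d : V} (ha : G.Adj x a) (hb : G.Adj x b) (hc : G.Adj x c)
    (hd : G.Adj x d)
    (haS : a ∈ S) (hbS : b ∈ S) (hcS : c ∈ S) (hdS : d ∈ S)
    (hab : a ≠ b) (hac : a ≠ c) (had : a ≠ d) (hbc : b ≠ c) (hbd : b ≠ d) (hcd : c ≠ d) :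
    4 ≤ degIn G S x := by
  have hsub : ({a, b, c, d} : Finset V) ⊆ S.filter fun w => G.Adj x w := by
    intro t ht
    simp only [Finset.mem_insert, Finset.mem_singleton] at ht
    rw [Finset.mem_filter]
    rcases ht with rfl | rfl | rfl | rfl
    exacts [⟨haS, ha⟩, ⟨hbS, hb⟩, ⟨hcS, hc⟩, ⟨hdS, hd⟩]
  have hcard : ({a, b, c, d} : Finset V).card = 4 := by
    rw [Finset.card_insert_of_notMem (by simp [hab, hac, had]),
      Finset.card_insert_of_notMem (by simp [hbc, hbd]), Finset.card_pair hcd]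
  calc 4 = ({a, b, c, d} : Finset V).card := hcard.symm
    _ ≤ _ := Finset.card_le_card hsub

lemma degIn_univ {V : Type} [Fintype V] [DecidableEq V] (G : SimpleGraph V)
    [DecidableRel G.Adj] (w : V) : degIn G Finset.univ w = G.degree w := by
  show (Finset.univ.filter fun x => G.Adj w x).card = G.degree w
  rw [← SimpleGraph.neighborFinset_eq_filter, SimpleGraph.degree]

set_option maxHeartbeats 4000000 in
theorem twoTrianglesAtVertex_reducible {V : Type} [Fintype V] [DecidableEq V]
    (G : SimpleGraph V) [DecidableRel G.Adj]
    (v u1 u2 w1 w2 : V)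
    (hvu1 : G.Adj v u1) (hvu2 : G.Adj v u2) (hu12 : G.Adj u1 u2)
    (hvw1 : G.Adj v w1) (hvw2 : G.Adj v w2) (hw12 : G.Adj w1 w2)
    (hne : u1 ≠ w1 ∧ u1 ≠ w2 ∧ u2 ≠ w1 ∧ u2 ≠ w2)
    (hdv : G.degree v = 4) (hdu1 : G.degree u1 = 3) (hdu2 : G.degree u2 = 4)
    (hdw1 : G.degree w1 = 3) (hdw2 : G.degree w2 = 4) :
    BoundaryReducibleIn
      ({⟨Fin 4, SimpleGraph.cycleGraph 4⟩} : Set ((W : Type) × SimpleGraph W)) 4 G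
      Finset.univ {u1, u2, v, w1, w2} ∅ := by
  obtain ⟨d1w1, d1w2, d2w1, d2w2⟩ := hne
  have d12 : u1 ≠ u2 := hu12.ne
  have dv1 : v ≠ u1 := hvu1.ne
  have dv2 : v ≠ u2 := hvu2.ne
  have dvw1 : v ≠ w1 := hvw1.ne
  have dvw2 : v ≠ w2 := hvw2.ne
  have dw12 : w1 ≠ w2 := hw12.ne
  have hu1v : G.Adj u1 v := hvu1.symm
  have hu2v : G.Adj u2 v := hvu2.symm
  have hw1v : G.Adj w1 v := hvw1.symm
  have hw2v : G.Adj w2 v := hvw2.symm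
  have hu2u1 : G.Adj u2 u1 := hu12.symm
  have hw2w1 : G.Adj w2 w1 := hw12.symm
  have hSu1 : u1 ∈ ({u1, u2, v, w1, w2} : Finset V) := by simp
  have hSu2 : u2 ∈ ({u1, u2, v, w1, w2} : Finset V) := by simp
  have hSv : v ∈ ({u1, u2, v, w1, w2} : Finset V) := by simp
  have hSw1 : w1 ∈ ({u1, u2, v, w1, w2} : Finset V) := by simp
  have hSw2 : w2 ∈ ({u1, u2, v, w1, w2} : Finset V) := by simp
  have hT : ({u1, u2, v, w1, w2} : Finset V) \ ∅ = {u1, u2, v, w1, w2} := Finset.sdiff_empty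
  have Dv : 4 ≤ degIn G ({u1, u2, v, w1, w2} : Finset V) v :=
    degIn_ge4 G hvu1 hvu2 hvw1 hvw2 hSu1 hSu2 hSw1 hSw2 d12 d1w1 d1w2 d2w1 d2w2 dw12
  have Du1 : 2 + (if G.Adj w1 u1 then 1 else 0) + (if G.Adj w2 u1 then 1 else 0)
      ≤ degIn G ({u1, u2, v, w1, w2} : Finset V) u1 := by
    by_cases h1 : G.Adj w1 u1 <;> by_cases h2 : G.Adj w2 u1
    · rw [if_pos h1, if_pos h2]
      have := degIn_ge4 G hu1v hu12 h1.symm h2.symm hSv hSu2 hSw1 hSw2 dv2 dvw1 dvw2 d2w1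
        d2w2 dw12
      omega
    · rw [if_pos h1, if_neg h2]
      have := degIn_ge3 G hu1v hu12 h1.symm hSv hSu2 hSw1 dv2 dvw1 d2w1
      omega
    · rw [if_neg h1, if_pos h2]
      have := degIn_ge3 G hu1v hu12 h2.symm hSv hSu2 hSw2 dv2 dvw2 d2w2
      omega
    · rw [if_neg h1, if_neg h2]
      have := degIn_ge2 G hu1v hu12 hSv hSu2 dv2
      omega
  have Du2 : 2 + (if G.Adj w1 u2 then 1 else 0) + (if G.Adj w2 u2 then 1 else 0)
      ≤ degIn G ({u1, u2, v, w1, w2} : Finset V) u2 := by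
    by_cases h1 : G.Adj w1 u2 <;> by_cases h2 : G.Adj w2 u2
    · rw [if_pos h1, if_pos h2]
      have := degIn_ge4 G hu2v hu2u1 h1.symm h2.symm hSv hSu1 hSw1 hSw2 dv1 dvw1 dvw2 d1w1
        d1w2 dw12
      omega
    · rw [if_pos h1, if_neg h2]
      have := degIn_ge3 G hu2v hu2u1 h1.symm hSv hSu1 hSw1 dv1 dvw1 d1w1
      omega
    · rw [if_neg h1, if_pos h2]
      have := degIn_ge3 G hu2v hu2u1 h2.symm hSv hSu1 hSw2 dv1 dvw2 d1w2
      omega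
    · rw [if_neg h1, if_neg h2]
      have := degIn_ge2 G hu2v hu2u1 hSv hSu1 dv1
      omega
  have Dw1 : 2 + (if G.Adj u1 w1 then 1 else 0) + (if G.Adj u2 w1 then 1 else 0)
      ≤ degIn G ({u1, u2, v, w1, w2} : Finset V) w1 := by
    by_cases h1 : G.Adj u1 w1 <;> by_cases h2 : G.Adj u2 w1
    · rw [if_pos h1, if_pos h2]
      have := degIn_ge4 G hw1v hw12 h1.symm h2.symm hSv hSw2 hSu1 hSu2 dvw2 dv1 dv2
        (Ne.symm d1w2) (Ne.symm d2w2) d12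
      omega
    · rw [if_pos h1, if_neg h2]
      have := degIn_ge3 G hw1v hw12 h1.symm hSv hSw2 hSu1 dvw2 dv1 (Ne.symm d1w2)
      omega
    · rw [if_neg h1, if_pos h2]
      have := degIn_ge3 G hw1v hw12 h2.symm hSv hSw2 hSu2 dvw2 dv2 (Ne.symm d2w2)
      omega
    · rw [if_neg h1, if_neg h2]
      have := degIn_ge2 G hw1v hw12 hSv hSw2 dvw2
      omega
  have Dw2 : 2 + (if G.Adj u1 w2 then 1 else 0) + (if G.Adj u2 w2 then 1 else 0)
      ≤ degIn G ({u1, u2, v, w1, w2} : Finset V) w2 := by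
    by_cases h1 : G.Adj u1 w2 <;> by_cases h2 : G.Adj u2 w2
    · rw [if_pos h1, if_pos h2]
      have := degIn_ge4 G hw2v hw2w1 h1.symm h2.symm hSv hSw1 hSu1 hSu2 dvw1 dv1 dv2
        (Ne.symm d1w1) (Ne.symm d2w1) d12
      omega
    · rw [if_pos h1, if_neg h2]
      have := degIn_ge3 G hw2v hw2w1 h1.symm hSv hSw1 hSu1 dvw1 dv1 (Ne.symm d1w1)
      omega
    · rw [if_neg h1, if_pos h2]
      have := degIn_ge3 G hw2v hw2w1 h2.symm hSv hSw1 hSu2 dvw1 dv2 (Ne.symm d2w1)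
      omega
    · rw [if_neg h1, if_neg h2]
      have := degIn_ge2 G hw2v hw2w1 hSv hSw1 dvw1
      omega
  refine ⟨Finset.subset_univ _, Finset.empty_ssubset.mpr ⟨u1, hSu1⟩, ?_, ?_⟩
  · -- FIX
    intro x hx
    rw [hT] at hx ⊢
    simp only [Finset.mem_insert, Finset.mem_singleton] at hx
    intro L hL
    rcases hx with hx | hx | hx | hx | hx <;> subst x
    · -- x = u1 : order (u1, u2, w2, w1, v)
      have hb1 : 1 ≤ (L u1).card := by
        have h := hL u1 (by simp)
        rw [Function.update_self] at h
        exact_mod_cast h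
      have hb2 : degIn G ({u1, u2, v, w1, w2} : Finset V) u2 ≤ (L u2).card := by
        have h := hL u2 (by simp)
        simp only [Function.update_apply] at h
        rw [if_neg (Ne.symm d12), degIn_univ, hdu2] at h
        omega
      have hb3 : degIn G ({u1, u2, v, w1, w2} : Finset V) w2 ≤ (L w2).card := by
        have h := hL w2 (by simp)
        simp only [Function.update_apply] at h
        rw [if_neg (Ne.symm d1w2), degIn_univ, hdw2] at h
        omega
      have hb4 : degIn G ({u1, u2, v, w1, w2} : Finset V) w1 + 1 ≤ (L w1).card := by
        have h := hL w1 (by simp)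
        simp only [Function.update_apply] at h
        rw [if_neg (Ne.symm d1w1), degIn_univ, hdw1] at h
        omega
      have hb5 : 4 ≤ (L v).card := by
        have h := hL v (by simp)
        simp only [Function.update_apply] at h
        rw [if_neg dv1, degIn_univ, hdv] at h
        omega
      have hk2 : 1 + (if G.Adj u1 u2 then 1 else 0) ≤ (L u2).card := by
        rw [if_pos hu12]; omega
      have hk3 : 1 + (if G.Adj u1 w2 then 1 else 0) + (if G.Adj u2 w2 then 1 else 0)
          ≤ (L w2).card := by omega
      have hk4 : 2 + (if G.Adj u1 w1 then 1 else 0) + (if G.Adj u2 w1 then 1 else 0)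
          + (if G.Adj w2 w1 then 1 else 0) ≤ (L w1).card := by
        rw [if_pos hw2w1]; omega
      obtain ⟨φ, hφ1, hφ2⟩ := colorA G u1 u2 w2 w1 v L d12 d1w2 d1w1 (Ne.symm dv1) d2w2
        d2w1 (Ne.symm dv2) (Ne.symm dw12) (Ne.symm dvw2) (Ne.symm dvw1) hb1 hk2 hk3 hk4 hb5
      refine ⟨φ, ?_, ?_⟩
      · intro t ht
        simp only [Finset.mem_insert, Finset.mem_singleton] at ht
        exact hφ1 t (by rcases ht with h | h | h | h | h <;> simp [h])
      · intro a ha b hb hadj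
        simp only [Finset.mem_insert, Finset.mem_singleton] at ha hb
        refine hφ2 a b ?_ ?_ hadj
        · rcases ha with h | h | h | h | h <;> simp [h]
        · rcases hb with h | h | h | h | h <;> simp [h]
    · -- x = u2 : order (u2, u1, w2, w1, v)
      have hb1 : 1 ≤ (L u2).card := by
        have h := hL u2 (by simp)
        rw [Function.update_self] at h
        exact_mod_cast h
      have hb2 : degIn G ({u1, u2, v, w1, w2} : Finset V) u1 + 1 ≤ (L u1).card := by
        have h := hL u1 (by simp)
        simp only [Function.update_apply] at h
        rw [if_neg d12, degIn_univ, hdu1] at h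
        omega
      have hb3 : degIn G ({u1, u2, v, w1, w2} : Finset V) w2 ≤ (L w2).card := by
        have h := hL w2 (by simp)
        simp only [Function.update_apply] at h
        rw [if_neg (Ne.symm d2w2), degIn_univ, hdw2] at h
        omega
      have hb4 : degIn G ({u1, u2, v, w1, w2} : Finset V) w1 + 1 ≤ (L w1).card := by
        have h := hL w1 (by simp)
        simp only [Function.update_apply] at h
        rw [if_neg (Ne.symm d2w1), degIn_univ, hdw1] at h
        omega
      have hb5 : 4 ≤ (L v).card := by
        have h := hL v (by simp)
        simp only [Function.update_apply] at h
        rw [if_neg dv2, degIn_univ, hdv] at h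
        omega
      have hk2 : 1 + (if G.Adj u2 u1 then 1 else 0) ≤ (L u1).card := by
        rw [if_pos hu2u1]; omega
      have hk3 : 1 + (if G.Adj u2 w2 then 1 else 0) + (if G.Adj u1 w2 then 1 else 0)
          ≤ (L w2).card := by omega
      have hk4 : 2 + (if G.Adj u2 w1 then 1 else 0) + (if G.Adj u1 w1 then 1 else 0)
          + (if G.Adj w2 w1 then 1 else 0) ≤ (L w1).card := by
        rw [if_pos hw2w1]; omega
      obtain ⟨φ, hφ1, hφ2⟩ := colorA G u2 u1 w2 w1 v L (Ne.symm d12) d2w2 d2w1 (Ne.symm dv2)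
        d1w2 d1w1 (Ne.symm dv1) (Ne.symm dw12) (Ne.symm dvw2) (Ne.symm dvw1) hb1 hk2 hk3 hk4 hb5
      refine ⟨φ, ?_, ?_⟩
      · intro t ht
        simp only [Finset.mem_insert, Finset.mem_singleton] at ht
        exact hφ1 t (by rcases ht with h | h | h | h | h <;> simp [h])
      · intro a ha b hb hadj
        simp only [Finset.mem_insert, Finset.mem_singleton] at ha hb
        refine hφ2 a b ?_ ?_ hadj
        · rcases ha with h | h | h | h | h <;> simp [h]
        · rcases hb with h | h | h | h | h <;> simp [h]
    · -- x = v : order (v, u2, w2, u1, w1), plain greedy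
      have hb1 : 1 ≤ (L v).card := by
        have h := hL v (by simp)
        rw [Function.update_self] at h
        exact_mod_cast h
      have hb2 : degIn G ({u1, u2, v, w1, w2} : Finset V) u2 ≤ (L u2).card := by
        have h := hL u2 (by simp)
        simp only [Function.update_apply] at h
        rw [if_neg dv2.symm, degIn_univ, hdu2] at h
        omega
      have hb3 : degIn G ({u1, u2, v, w1, w2} : Finset V) w2 ≤ (L w2).card := by
        have h := hL w2 (by simp)
        simp only [Function.update_apply] at h
        rw [if_neg dvw2.symm, degIn_univ, hdw2] at h
        omega
      have hb4 : degIn G ({u1, u2, v, w1, w2} : Finset V) u1 + 1 ≤ (L u1).card := by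
        have h := hL u1 (by simp)
        simp only [Function.update_apply] at h
        rw [if_neg dv1.symm, degIn_univ, hdu1] at h
        omega
      have hb5 : degIn G ({u1, u2, v, w1, w2} : Finset V) w1 + 1 ≤ (L w1).card := by
        have h := hL w1 (by simp)
        simp only [Function.update_apply] at h
        rw [if_neg dvw1.symm, degIn_univ, hdw1] at h
        omega
      have hk2 : 1 + (if G.Adj v u2 then 1 else 0) ≤ (L u2).card := by
        rw [if_pos hvu2]; omega
      have hk3 : 1 + (if G.Adj v w2 then 1 else 0) + (if G.Adj u2 w2 then 1 else 0)
          ≤ (L w2).card := by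
        rw [if_pos hvw2]; omega
      have hk4 : 1 + (if G.Adj v u1 then 1 else 0) + (if G.Adj u2 u1 then 1 else 0)
          + (if G.Adj w2 u1 then 1 else 0) ≤ (L u1).card := by
        rw [if_pos hvu1, if_pos hu2u1]; omega
      have hk5 : 1 + (if G.Adj v w1 then 1 else 0) + (if G.Adj u2 w1 then 1 else 0)
          + (if G.Adj w2 w1 then 1 else 0) + (if G.Adj u1 w1 then 1 else 0)
          ≤ (L w1).card := by
        rw [if_pos hvw1, if_pos hw2w1]; omega
      obtain ⟨φ, hφ1, hφ2⟩ := colorB G v u2 w2 u1 w1 L dv2 dvw2 dv1 dvw1 d2w2 (Ne.symm d12)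
        d2w1 (Ne.symm d1w2) (Ne.symm dw12) d1w1 hb1 hk2 hk3 hk4 hk5
      refine ⟨φ, ?_, ?_⟩
      · intro t ht
        simp only [Finset.mem_insert, Finset.mem_singleton] at ht
        exact hφ1 t (by rcases ht with h | h | h | h | h <;> simp [h])
      · intro a ha b hb hadj
        simp only [Finset.mem_insert, Finset.mem_singleton] at ha hb
        refine hφ2 a b ?_ ?_ hadj
        · rcases ha with h | h | h | h | h <;> simp [h]
        · rcases hb with h | h | h | h | h <;> simp [h]
    · -- x = w1 : order (w1, w2, u2, u1, v)
      have hb1 : 1 ≤ (L w1).card := by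
        have h := hL w1 (by simp)
        rw [Function.update_self] at h
        exact_mod_cast h
      have hb2 : degIn G ({u1, u2, v, w1, w2} : Finset V) w2 ≤ (L w2).card := by
        have h := hL w2 (by simp)
        simp only [Function.update_apply] at h
        rw [if_neg (Ne.symm dw12), degIn_univ, hdw2] at h
        omega
      have hb3 : degIn G ({u1, u2, v, w1, w2} : Finset V) u2 ≤ (L u2).card := by
        have h := hL u2 (by simp)
        simp only [Function.update_apply] at h
        rw [if_neg d2w1, degIn_univ, hdu2] at h
        omega
      have hb4 : degIn G ({u1, u2, v, w1, w2} : Finset V) u1 + 1 ≤ (L u1).card := by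
        have h := hL u1 (by simp)
        simp only [Function.update_apply] at h
        rw [if_neg d1w1, degIn_univ, hdu1] at h
        omega
      have hb5 : 4 ≤ (L v).card := by
        have h := hL v (by simp)
        simp only [Function.update_apply] at h
        rw [if_neg dvw1, degIn_univ, hdv] at h
        omega
      have hk2 : 1 + (if G.Adj w1 w2 then 1 else 0) ≤ (L w2).card := by
        rw [if_pos hw12]; omega
      have hk3 : 1 + (if G.Adj w1 u2 then 1 else 0) + (if G.Adj w2 u2 then 1 else 0)
          ≤ (L u2).card := by omega
      have hk4 : 2 + (if G.Adj w1 u1 then 1 else 0) + (if G.Adj w2 u1 then 1 else 0)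
          + (if G.Adj u2 u1 then 1 else 0) ≤ (L u1).card := by
        rw [if_pos hu2u1]; omega
      obtain ⟨φ, hφ1, hφ2⟩ := colorA G w1 w2 u2 u1 v L dw12 (Ne.symm d2w1) (Ne.symm d1w1)
        (Ne.symm dvw1) (Ne.symm d2w2) (Ne.symm d1w2) (Ne.symm dvw2) (Ne.symm d12)
        (Ne.symm dv2) (Ne.symm dv1) hb1 hk2 hk3 hk4 hb5
      refine ⟨φ, ?_, ?_⟩
      · intro t ht
        simp only [Finset.mem_insert, Finset.mem_singleton] at ht
        exact hφ1 t (by rcases ht with h | h | h | h | h <;> simp [h])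
      · intro a ha b hb hadj
        simp only [Finset.mem_insert, Finset.mem_singleton] at ha hb
        refine hφ2 a b ?_ ?_ hadj
        · rcases ha with h | h | h | h | h <;> simp [h]
        · rcases hb with h | h | h | h | h <;> simp [h]
    · -- x = w2 : order (w2, w1, u2, u1, v)
      have hb1 : 1 ≤ (L w2).card := by
        have h := hL w2 (by simp)
        rw [Function.update_self] at h
        exact_mod_cast h
      have hb2 : degIn G ({u1, u2, v, w1, w2} : Finset V) w1 + 1 ≤ (L w1).card := by
        have h := hL w1 (by simp)
        simp only [Function.update_apply] at h
        rw [if_neg dw12, degIn_univ, hdw1] at h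
        omega
      have hb3 : degIn G ({u1, u2, v, w1, w2} : Finset V) u2 ≤ (L u2).card := by
        have h := hL u2 (by simp)
        simp only [Function.update_apply] at h
        rw [if_neg d2w2, degIn_univ, hdu2] at h
        omega
      have hb4 : degIn G ({u1, u2, v, w1, w2} : Finset V) u1 + 1 ≤ (L u1).card := by
        have h := hL u1 (by simp)
        simp only [Function.update_apply] at h
        rw [if_neg d1w2, degIn_univ, hdu1] at h
        omega
      have hb5 : 4 ≤ (L v).card := by
        have h := hL v (by simp)
        simp only [Function.update_apply] at h
        rw [if_neg dvw2, degIn_univ, hdv] at h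
        omega
      have hk2 : 1 + (if G.Adj w2 w1 then 1 else 0) ≤ (L w1).card := by
        rw [if_pos hw2w1]; omega
      have hk3 : 1 + (if G.Adj w2 u2 then 1 else 0) + (if G.Adj w1 u2 then 1 else 0)
          ≤ (L u2).card := by omega
      have hk4 : 2 + (if G.Adj w2 u1 then 1 else 0) + (if G.Adj w1 u1 then 1 else 0)
          + (if G.Adj u2 u1 then 1 else 0) ≤ (L u1).card := by
        rw [if_pos hu2u1]; omega
      obtain ⟨φ, hφ1, hφ2⟩ := colorA G w2 w1 u2 u1 v L (Ne.symm dw12) (Ne.symm d2w2)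
        (Ne.symm d1w2) (Ne.symm dvw2) (Ne.symm d2w1) (Ne.symm d1w1) (Ne.symm dvw1)
        (Ne.symm d12) (Ne.symm dv2) (Ne.symm dv1) hb1 hk2 hk3 hk4 hb5
      refine ⟨φ, ?_, ?_⟩
      · intro t ht
        simp only [Finset.mem_insert, Finset.mem_singleton] at ht
        exact hφ1 t (by rcases ht with h | h | h | h | h <;> simp [h])
      · intro a ha b hb hadj
        simp only [Finset.mem_insert, Finset.mem_singleton] at ha hb
        refine hφ2 a b ?_ ?_ hadj
        · rcases ha with h | h | h | h | h <;> simp [h]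
        · rcases hb with h | h | h | h | h <;> simp [h]
  · -- FORB
    intro I hIsub hIcard hIforb
    rw [hT] at hIsub ⊢
    have hC4 := hIforb ⟨Fin 4, SimpleGraph.cycleGraph 4⟩ rfl
    have hsingle : ∀ a ∈ I, ∀ b ∈ I, a = b := by
      intro a ha b hb
      by_contra hab
      have haS : a ∈ ({u1, u2, v, w1, w2} : Finset V) := hIsub ha
      have hbS : b ∈ ({u1, u2, v, w1, w2} : Finset V) := hIsub hb
      have hz : ∃ z, z ∈ ({u1, u2, v, w1, w2} : Finset V) ∧ G.Adj a z ∧ G.Adj z b := by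
        have haS' := haS
        have hbS' := hbS
        simp only [Finset.mem_insert, Finset.mem_singleton] at haS' hbS'
        rcases haS' with rfl | rfl | rfl | rfl | rfl <;>
          rcases hbS' with rfl | rfl | rfl | rfl | rfl <;>
          first
            | exact absurd rfl hab
            | exact ⟨v, hSv, by assumption, by assumption⟩
            | exact ⟨u1, hSu1, by assumption, by assumption⟩
            | exact ⟨u2, hSu2, by assumption, by assumption⟩
            | exact ⟨w1, hSw1, by assumption, by assumption⟩
            | exact ⟨w2, hSw2, by assumption, by assumption⟩
      obtain ⟨z, hzS, hz1, hz2⟩ := hz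
      exact hC4 (apex_c4_apex G _ I a z b haS hzS hbS ha hb hz1 hz2 hab)
    rcases I.eq_empty_or_nonempty with rfl | ⟨x, hxI⟩
    · -- I = ∅
      intro L hL
      have hb1 : degIn G ({u1, u2, v, w1, w2} : Finset V) u1 + 1 ≤ (L u1).card := by
        have h := hL u1 (by simp)
        simp only [Finset.notMem_empty, if_false, degIn_univ, hdu1] at h
        omega
      have hb2 : degIn G ({u1, u2, v, w1, w2} : Finset V) u2 ≤ (L u2).card := by
        have h := hL u2 (by simp)
        simp only [Finset.notMem_empty, if_false, degIn_univ, hdu2] at h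
        omega
      have hb3 : degIn G ({u1, u2, v, w1, w2} : Finset V) v ≤ (L v).card := by
        have h := hL v (by simp)
        simp only [Finset.notMem_empty, if_false, degIn_univ, hdv] at h
        omega
      have hb4 : degIn G ({u1, u2, v, w1, w2} : Finset V) w1 + 1 ≤ (L w1).card := by
        have h := hL w1 (by simp)
        simp only [Finset.notMem_empty, if_false, degIn_univ, hdw1] at h
        omega
      have hb5 : degIn G ({u1, u2, v, w1, w2} : Finset V) w2 ≤ (L w2).card := by
        have h := hL w2 (by simp)
        simp only [Finset.notMem_empty, if_false, degIn_univ, hdw2] at h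
        omega
      have hk1 : 1 ≤ (L u2).card := by omega
      have hk2 : 1 + (if G.Adj u2 w2 then 1 else 0) ≤ (L w2).card := by omega
      have hk3 : 1 + (if G.Adj u2 u1 then 1 else 0) + (if G.Adj w2 u1 then 1 else 0)
          ≤ (L u1).card := by
        rw [if_pos hu2u1]; omega
      have hk4 : 2 + (if G.Adj u2 w1 then 1 else 0) + (if G.Adj w2 w1 then 1 else 0)
          + (if G.Adj u1 w1 then 1 else 0) ≤ (L w1).card := by
        rw [if_pos hw2w1]; omega
      have hk5 : 4 ≤ (L v).card := by omega
      obtain ⟨φ, hφ1, hφ2⟩ := colorA G u2 w2 u1 w1 v L d2w2 (Ne.symm d12) d2w1 (Ne.symm dv2)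
        (Ne.symm d1w2) (Ne.symm dw12) (Ne.symm dvw2) d1w1 (Ne.symm dv1) (Ne.symm dvw1)
        hk1 hk2 hk3 hk4 hk5
      refine ⟨φ, ?_, ?_⟩
      · intro t ht
        simp only [Finset.mem_insert, Finset.mem_singleton] at ht
        exact hφ1 t (by rcases ht with h | h | h | h | h <;> simp [h])
      · intro a ha b hb hadj
        simp only [Finset.mem_insert, Finset.mem_singleton] at ha hb
        refine hφ2 a b ?_ ?_ hadj
        · rcases ha with h | h | h | h | h <;> simp [h]
        · rcases hb with h | h | h | h | h <;> simp [h]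
    · -- I = {x}
      have hI : I = {x} :=
        Finset.eq_singleton_iff_unique_mem.mpr ⟨hxI, fun y hy => hsingle y hy x hxI⟩
      subst hI
      have hxS : x ∈ ({u1, u2, v, w1, w2} : Finset V) := hIsub (by simp)
      simp only [Finset.mem_insert, Finset.mem_singleton] at hxS
      intro L hL
      rcases hxS with hx | hx | hx | hx | hx <;> subst x
      · -- I = {u1}
        have hb1 : degIn G ({u1, u2, v, w1, w2} : Finset V) u1 ≤ (L u1).card := by
          have h := hL u1 (by simp)
          simp only [Finset.mem_singleton, if_pos rfl, degIn_univ, hdu1] at h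
          omega
        have hb2 : degIn G ({u1, u2, v, w1, w2} : Finset V) u2 ≤ (L u2).card := by
          have h := hL u2 (by simp)
          simp only [Finset.mem_singleton, degIn_univ, hdu2] at h
          rw [if_neg (Ne.symm d12)] at h
          omega
        have hb3 : degIn G ({u1, u2, v, w1, w2} : Finset V) v ≤ (L v).card := by
          have h := hL v (by simp)
          simp only [Finset.mem_singleton, degIn_univ, hdv] at h
          rw [if_neg dv1] at h
          omega
        have hb4 : degIn G ({u1, u2, v, w1, w2} : Finset V) w1 + 1 ≤ (L w1).card := by
          have h := hL w1 (by simp)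
          simp only [Finset.mem_singleton, degIn_univ, hdw1] at h
          rw [if_neg (Ne.symm d1w1)] at h
          omega
        have hb5 : degIn G ({u1, u2, v, w1, w2} : Finset V) w2 ≤ (L w2).card := by
          have h := hL w2 (by simp)
          simp only [Finset.mem_singleton, degIn_univ, hdw2] at h
          rw [if_neg (Ne.symm d1w2)] at h
          omega
        have hk1 : 1 ≤ (L u2).card := by omega
        have hk2 : 1 + (if G.Adj u2 w2 then 1 else 0) ≤ (L w2).card := by omega
        have hk3 : 1 + (if G.Adj u2 u1 then 1 else 0) + (if G.Adj w2 u1 then 1 else 0)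
            ≤ (L u1).card := by
          rw [if_pos hu2u1]; omega
        have hk4 : 2 + (if G.Adj u2 w1 then 1 else 0) + (if G.Adj w2 w1 then 1 else 0)
            + (if G.Adj u1 w1 then 1 else 0) ≤ (L w1).card := by
          rw [if_pos hw2w1]; omega
        have hk5 : 4 ≤ (L v).card := by omega
        obtain ⟨φ, hφ1, hφ2⟩ := colorA G u2 w2 u1 w1 v L d2w2 (Ne.symm d12) d2w1 (Ne.symm dv2)
          (Ne.symm d1w2) (Ne.symm dw12) (Ne.symm dvw2) d1w1 (Ne.symm dv1) (Ne.symm dvw1)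
          hk1 hk2 hk3 hk4 hk5
        refine ⟨φ, ?_, ?_⟩
        · intro t ht
          simp only [Finset.mem_insert, Finset.mem_singleton] at ht
          exact hφ1 t (by rcases ht with h | h | h | h | h <;> simp [h])
        · intro a ha b hb hadj
          simp only [Finset.mem_insert, Finset.mem_singleton] at ha hb
          refine hφ2 a b ?_ ?_ hadj
          · rcases ha with h | h | h | h | h <;> simp [h]
          · rcases hb with h | h | h | h | h <;> simp [h]
      · -- I = {u2}
        have hb1 : degIn G ({u1, u2, v, w1, w2} : Finset V) u1 + 1 ≤ (L u1).card := by
          have h := hL u1 (by simp)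
          simp only [Finset.mem_singleton, degIn_univ, hdu1] at h
          rw [if_neg d12] at h
          omega
        have hb2 : degIn G ({u1, u2, v, w1, w2} : Finset V) u2 ≤ (L u2).card + 1 := by
          have h := hL u2 (by simp)
          simp only [Finset.mem_singleton, if_pos rfl, degIn_univ, hdu2] at h
          omega
        have hb3 : degIn G ({u1, u2, v, w1, w2} : Finset V) v ≤ (L v).card := by
          have h := hL v (by simp)
          simp only [Finset.mem_singleton, degIn_univ, hdv] at h
          rw [if_neg dv2] at h
          omega
        have hb4 : degIn G ({u1, u2, v, w1, w2} : Finset V) w1 + 1 ≤ (L w1).card := by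
          have h := hL w1 (by simp)
          simp only [Finset.mem_singleton, degIn_univ, hdw1] at h
          rw [if_neg (Ne.symm d2w1)] at h
          omega
        have hb5 : degIn G ({u1, u2, v, w1, w2} : Finset V) w2 ≤ (L w2).card := by
          have h := hL w2 (by simp)
          simp only [Finset.mem_singleton, degIn_univ, hdw2] at h
          rw [if_neg (Ne.symm d2w2)] at h
          omega
        have hk1 : 1 ≤ (L u2).card := by omega
        have hk2 : 1 + (if G.Adj u2 w2 then 1 else 0) ≤ (L w2).card := by omega
        have hk3 : 1 + (if G.Adj u2 u1 then 1 else 0) + (if G.Adj w2 u1 then 1 else 0)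
            ≤ (L u1).card := by
          rw [if_pos hu2u1]; omega
        have hk4 : 2 + (if G.Adj u2 w1 then 1 else 0) + (if G.Adj w2 w1 then 1 else 0)
            + (if G.Adj u1 w1 then 1 else 0) ≤ (L w1).card := by
          rw [if_pos hw2w1]; omega
        have hk5 : 4 ≤ (L v).card := by omega
        obtain ⟨φ, hφ1, hφ2⟩ := colorA G u2 w2 u1 w1 v L d2w2 (Ne.symm d12) d2w1 (Ne.symm dv2)
          (Ne.symm d1w2) (Ne.symm dw12) (Ne.symm dvw2) d1w1 (Ne.symm dv1) (Ne.symm dvw1)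
          hk1 hk2 hk3 hk4 hk5
        refine ⟨φ, ?_, ?_⟩
        · intro t ht
          simp only [Finset.mem_insert, Finset.mem_singleton] at ht
          exact hφ1 t (by rcases ht with h | h | h | h | h <;> simp [h])
        · intro a ha b hb hadj
          simp only [Finset.mem_insert, Finset.mem_singleton] at ha hb
          refine hφ2 a b ?_ ?_ hadj
          · rcases ha with h | h | h | h | h <;> simp [h]
          · rcases hb with h | h | h | h | h <;> simp [h]
      · -- I = {v} : the special case
        have hnp : ¬ G.Adj u1 w1 := fun hp => hC4 (apex_c4_inner G _ _ u1 u2 v w1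
          hSu1 hSu2 hSv hSw1 hu12 hu2v hvw1 hp.symm (Ne.symm dv1) d2w1)
        have hnq : ¬ G.Adj u1 w2 := fun hq => hC4 (apex_c4_inner G _ _ u1 v w1 w2
          hSu1 hSv hSw1 hSw2 hu1v hvw1 hw12 hq.symm d1w1 dvw2)
        have hnr : ¬ G.Adj u2 w1 := fun hr => hC4 (apex_c4_inner G _ _ u2 v w2 w1
          hSu2 hSv hSw2 hSw1 hu2v hvw2 hw2w1 hr.symm d2w2 dvw1)
        have hns : ¬ G.Adj u2 w2 := fun hs => hC4 (apex_c4_inner G _ _ u2 v w1 w2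
          hSu2 hSv hSw1 hSw2 hu2v hvw1 hw12 hs.symm d2w1 dvw2)
        have hb1 : 3 ≤ (L u1).card := by
          have h := hL u1 (by simp)
          simp only [Finset.mem_singleton, degIn_univ, hdu1] at h
          rw [if_neg (Ne.symm dv1)] at h
          omega
        have hb2 : 2 ≤ (L u2).card := by
          have h := hL u2 (by simp)
          simp only [Finset.mem_singleton, degIn_univ, hdu2] at h
          rw [if_neg (Ne.symm dv2)] at h
          omega
        have hb3 : 3 ≤ (L v).card := by
          have h := hL v (by simp)
          simp only [Finset.mem_singleton, if_pos rfl, degIn_univ, hdv] at h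
          omega
        have hb4 : 3 ≤ (L w1).card := by
          have h := hL w1 (by simp)
          simp only [Finset.mem_singleton, degIn_univ, hdw1] at h
          rw [if_neg (Ne.symm dvw1)] at h
          omega
        have hb5 : 2 ≤ (L w2).card := by
          have h := hL w2 (by simp)
          simp only [Finset.mem_singleton, degIn_univ, hdw2] at h
          rw [if_neg (Ne.symm dvw2)] at h
          omega
        have main : ∃ φ : V → ℕ,
            (∀ t, t = u2 ∨ t = w2 ∨ t = u1 ∨ t = w1 ∨ t = v → φ t ∈ L t) ∧
            ∀ a b, (a = u2 ∨ a = w2 ∨ a = u1 ∨ a = w1 ∨ a = v) →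
              (b = u2 ∨ b = w2 ∨ b = u1 ∨ b = w1 ∨ b = v) → G.Adj a b → φ a ≠ φ b := by
          by_cases hbig : 4 ≤ (L v).card
          · refine colorA G u2 w2 u1 w1 v L d2w2 (Ne.symm d12) d2w1 (Ne.symm dv2)
              (Ne.symm d1w2) (Ne.symm dw12) (Ne.symm dvw2) d1w1 (Ne.symm dv1) (Ne.symm dvw1)
              (by omega) ?_ ?_ ?_ hbig
            · rw [if_neg hns]; omega
            · rw [if_pos hu2u1, if_neg (fun h => hnq h.symm)]; omega
            · rw [if_neg hnr, if_pos hw2w1, if_neg hnp]; omega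
          · by_cases hsub2 : L u2 ⊆ L v
            · by_cases hsub2' : L w2 ⊆ L v
              · -- common color for u2, w2
                have hnd : ¬ Disjoint (L u2) (L w2) := by
                  intro hd
                  have he1 := Finset.card_union_of_disjoint hd
                  have he2 := Finset.card_le_card (Finset.union_subset hsub2 hsub2')
                  omega
                obtain ⟨c, hcu, hcw⟩ := Finset.not_disjoint_iff.mp hnd
                obtain ⟨φ, hφ1, hφ2⟩ := colorC2 G u2 w2 w1 u1 v L c d2w2 d2w1 (Ne.symm d12)
                  (Ne.symm dv2) (Ne.symm dw12) (Ne.symm d1w2) (Ne.symm dvw2) (Ne.symm d1w1)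
                  (Ne.symm dvw1) (Ne.symm dv1) hns (fun h => hnp h.symm) hcu hcw (by omega)
                  (by omega) (by omega)
                refine ⟨φ, ?_, ?_⟩
                · intro t ht
                  exact hφ1 t (by rcases ht with h | h | h | h | h <;> simp [h])
                · intro a b ha hb hadj
                  refine hφ2 a b ?_ ?_ hadj
                  · rcases ha with h | h | h | h | h <;> simp [h]
                  · rcases hb with h | h | h | h | h <;> simp [h]
              · -- a color of w2 outside L v
                obtain ⟨c, hcw, hcv⟩ := Finset.not_subset.mp hsub2'
                obtain ⟨φ, hφ1, hφ2⟩ := colorC1 G w2 u2 u1 w1 v L c (Ne.symm d2w2)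
                  (Ne.symm d1w2) (Ne.symm dw12) (Ne.symm dvw2) (Ne.symm d12) d2w1
                  (Ne.symm dv2) d1w1 (Ne.symm dv1) (Ne.symm dvw1)
                  (fun h => hns h.symm) (fun h => hnq h.symm) hnr hnp hcw hcv
                  (by omega) (by omega) (by omega) (by omega)
                refine ⟨φ, ?_, ?_⟩
                · intro t ht
                  exact hφ1 t (by rcases ht with h | h | h | h | h <;> simp [h])
                · intro a b ha hb hadj
                  refine hφ2 a b ?_ ?_ hadj
                  · rcases ha with h | h | h | h | h <;> simp [h]
                  · rcases hb with h | h | h | h | h <;> simp [h]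
            · -- a color of u2 outside L v
              obtain ⟨c, hcu, hcv⟩ := Finset.not_subset.mp hsub2
              obtain ⟨φ, hφ1, hφ2⟩ := colorC1 G u2 w2 w1 u1 v L c d2w2 d2w1 (Ne.symm d12)
                (Ne.symm dv2) (Ne.symm dw12) (Ne.symm d1w2) (Ne.symm dvw2) (Ne.symm d1w1)
                (Ne.symm dvw1) (Ne.symm dv1) hns hnr (fun h => hnq h.symm)
                (fun h => hnp h.symm) hcu hcv (by omega) (by omega) (by omega) (by omega)
              refine ⟨φ, ?_, ?_⟩
              · intro t ht
                exact hφ1 t (by rcases ht with h | h | h | h | h <;> simp [h])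
              · intro a b ha hb hadj
                refine hφ2 a b ?_ ?_ hadj
                · rcases ha with h | h | h | h | h <;> simp [h]
                · rcases hb with h | h | h | h | h <;> simp [h]
        obtain ⟨φ, hφ1, hφ2⟩ := main
        refine ⟨φ, ?_, ?_⟩
        · intro t ht
          simp only [Finset.mem_insert, Finset.mem_singleton] at ht
          exact hφ1 t (by rcases ht with h | h | h | h | h <;> simp [h])
        · intro a ha b hb hadj
          simp only [Finset.mem_insert, Finset.mem_singleton] at ha hb
          refine hφ2 a b ?_ ?_ hadj
          · rcases ha with h | h | h | h | h <;> simp [h]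
          · rcases hb with h | h | h | h | h <;> simp [h]
      · -- I = {w1}
        have hb1 : degIn G ({u1, u2, v, w1, w2} : Finset V) u1 + 1 ≤ (L u1).card := by
          have h := hL u1 (by simp)
          simp only [Finset.mem_singleton, degIn_univ, hdu1] at h
          rw [if_neg d1w1] at h
          omega
        have hb2 : degIn G ({u1, u2, v, w1, w2} : Finset V) u2 ≤ (L u2).card := by
          have h := hL u2 (by simp)
          simp only [Finset.mem_singleton, degIn_univ, hdu2] at h
          rw [if_neg d2w1] at h
          omega
        have hb3 : degIn G ({u1, u2, v, w1, w2} : Finset V) v ≤ (L v).card := by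
          have h := hL v (by simp)
          simp only [Finset.mem_singleton, degIn_univ, hdv] at h
          rw [if_neg dvw1] at h
          omega
        have hb4 : degIn G ({u1, u2, v, w1, w2} : Finset V) w1 ≤ (L w1).card := by
          have h := hL w1 (by simp)
          simp only [Finset.mem_singleton, if_pos rfl, degIn_univ, hdw1] at h
          omega
        have hb5 : degIn G ({u1, u2, v, w1, w2} : Finset V) w2 ≤ (L w2).card := by
          have h := hL w2 (by simp)
          simp only [Finset.mem_singleton, degIn_univ, hdw2] at h
          rw [if_neg (Ne.symm dw12)] at h
          omega
        have hk1 : 1 ≤ (L w2).card := by omega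
        have hk2 : 1 + (if G.Adj w2 u2 then 1 else 0) ≤ (L u2).card := by omega
        have hk3 : 1 + (if G.Adj w2 w1 then 1 else 0) + (if G.Adj u2 w1 then 1 else 0)
            ≤ (L w1).card := by
          rw [if_pos hw2w1]; omega
        have hk4 : 2 + (if G.Adj w2 u1 then 1 else 0) + (if G.Adj u2 u1 then 1 else 0)
            + (if G.Adj w1 u1 then 1 else 0) ≤ (L u1).card := by
          rw [if_pos hu2u1]; omega
        have hk5 : 4 ≤ (L v).card := by omega
        obtain ⟨φ, hφ1, hφ2⟩ := colorA G w2 u2 w1 u1 v L (Ne.symm d2w2) (Ne.symm dw12)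
          (Ne.symm d1w2) (Ne.symm dvw2) d2w1 (Ne.symm d12) (Ne.symm dv2) (Ne.symm d1w1)
          (Ne.symm dvw1) (Ne.symm dv1) hk1 hk2 hk3 hk4 hk5
        refine ⟨φ, ?_, ?_⟩
        · intro t ht
          simp only [Finset.mem_insert, Finset.mem_singleton] at ht
          exact hφ1 t (by rcases ht with h | h | h | h | h <;> simp [h])
        · intro a ha b hb hadj
          simp only [Finset.mem_insert, Finset.mem_singleton] at ha hb
          refine hφ2 a b ?_ ?_ hadj
          · rcases ha with h | h | h | h | h <;> simp [h]
          · rcases hb with h | h | h | h | h <;> simp [h]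
      · -- I = {w2}
        have hb1 : degIn G ({u1, u2, v, w1, w2} : Finset V) u1 + 1 ≤ (L u1).card := by
          have h := hL u1 (by simp)
          simp only [Finset.mem_singleton, degIn_univ, hdu1] at h
          rw [if_neg d1w2] at h
          omega
        have hb2 : degIn G ({u1, u2, v, w1, w2} : Finset V) u2 ≤ (L u2).card := by
          have h := hL u2 (by simp)
          simp only [Finset.mem_singleton, degIn_univ, hdu2] at h
          rw [if_neg d2w2] at h
          omega
        have hb3 : degIn G ({u1, u2, v, w1, w2} : Finset V) v ≤ (L v).card := by
          have h := hL v (by simp)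
          simp only [Finset.mem_singleton, degIn_univ, hdv] at h
          rw [if_neg dvw2] at h
          omega
        have hb4 : degIn G ({u1, u2, v, w1, w2} : Finset V) w1 + 1 ≤ (L w1).card := by
          have h := hL w1 (by simp)
          simp only [Finset.mem_singleton, degIn_univ, hdw1] at h
          rw [if_neg dw12] at h
          omega
        have hb5 : degIn G ({u1, u2, v, w1, w2} : Finset V) w2 ≤ (L w2).card + 1 := by
          have h := hL w2 (by simp)
          simp only [Finset.mem_singleton, if_pos rfl, degIn_univ, hdw2] at h
          omega
        have hk1 : 1 ≤ (L u2).card := by omega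
        have hk2 : 1 + (if G.Adj u2 w2 then 1 else 0) ≤ (L w2).card := by omega
        have hk3 : 1 + (if G.Adj u2 u1 then 1 else 0) + (if G.Adj w2 u1 then 1 else 0)
            ≤ (L u1).card := by
          rw [if_pos hu2u1]; omega
        have hk4 : 2 + (if G.Adj u2 w1 then 1 else 0) + (if G.Adj w2 w1 then 1 else 0)
            + (if G.Adj u1 w1 then 1 else 0) ≤ (L w1).card := by
          rw [if_pos hw2w1]; omega
        have hk5 : 4 ≤ (L v).card := by omega
        obtain ⟨φ, hφ1, hφ2⟩ := colorA G u2 w2 u1 w1 v L d2w2 (Ne.symm d12) d2w1 (Ne.symm dv2)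
          (Ne.symm d1w2) (Ne.symm dw12) (Ne.symm dvw2) d1w1 (Ne.symm dv1) (Ne.symm dvw1)
          hk1 hk2 hk3 hk4 hk5
        refine ⟨φ, ?_, ?_⟩
        · intro t ht
          simp only [Finset.mem_insert, Finset.mem_singleton] at ht
          exact hφ1 t (by rcases ht with h | h | h | h | h <;> simp [h])
        · intro a ha b hb hadj
          simp only [Finset.mem_insert, Finset.mem_singleton] at ha hb
          refine hφ2 a b ?_ ?_ hadj
          · rcases ha with h | h | h | h | h <;> simp [h]
          · rcases hb with h | h | h | h | h <;> simp [h]
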